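/- arXiv:1302.3157 — 2 statements merged into one kernel-verified Lean document; each statement's English description precedes it below -/
import Mathlib

section
/- In the hyperoctahedral group B_n, the maximal length representative of a left coset W_P w (where W_P is generated by s_2,...,s_n) is the unique element of the coset whose one-line notation has the values -2,-3,...,-n appearing in that order (with 1 or -1 in the position determined by the coset). -/
/-- `w` is a signed permutation of `{1,…,n}` (type `B` Weyl group element),
viewed inside `Equiv.Perm ℤ`: it is odd and fixes everything beyond `n`. -/
def IsSignedPerm (n : ℕ) (w : Equiv.Perm ℤ) : Prop :=
  (∀ x : ℤ, w (-x) = - w x) ∧ ∀ x : ℤ, (n : ℤ) < |x| → w x = x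

/-- The simple reflections of the hyperoctahedral group `Bₙ`:
for `i < n`, `sᵢ` swaps the values `i, i+1` (and `-i, -(i+1)`);
`sₙ` changes the sign of `n`. -/
def simpleB (n i : ℕ) : Equiv.Perm ℤ :=
  if i = n then Equiv.swap (n : ℤ) (-(n : ℤ))
  else Equiv.swap (i : ℤ) ((i : ℤ) + 1) * Equiv.swap (-(i : ℤ)) (-(i : ℤ) - 1)

/-- The parabolic subgroup `W_P` generated by `s₂, …, sₙ`. -/
def WP_B (n : ℕ) : Subgroup (Equiv.Perm ℤ) :=
  Subgroup.closure {g | ∃ i : ℕ, 2 ≤ i ∧ i ≤ n ∧ g = simpleB n i}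

/-- The type `B` length function. -/
noncomputable def lenB (n : ℕ) (w : Equiv.Perm ℤ) : ℕ :=
  ((Finset.Icc (1 : ℤ) (n : ℤ) ×ˢ Finset.Icc (1 : ℤ) (n : ℤ)).filter
    (fun p => p.1 < p.2 ∧ w p.2 < w p.1)).card +
  ((Finset.Icc (1 : ℤ) (n : ℤ) ×ˢ Finset.Icc (1 : ℤ) (n : ℤ)).filter
    (fun p => p.1 ≤ p.2 ∧ w p.1 + w p.2 < 0)).card

/-- Reflections of `Bₙ`: conjugates of simple reflections by group elements. -/
def IsReflB (n : ℕ) (t : Equiv.Perm ℤ) : Prop :=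
  ∃ g s : Equiv.Perm ℤ, IsSignedPerm n g ∧
    (∃ i : ℕ, 1 ≤ i ∧ i ≤ n ∧ s = simpleB n i) ∧ t = g * s * g⁻¹

/-- Bruhat order on `Bₙ`. -/
def BruhatLE_B (n : ℕ) : Equiv.Perm ℤ → Equiv.Perm ℤ → Prop :=
  Relation.ReflTransGen
    (fun a b => (∃ t, IsReflB n t ∧ b = t * a) ∧ lenB n a < lenB n b)

/-- `v` is a minimal length representative of its left coset `W_P v`. -/
def IsMinRepB (n : ℕ) (v : Equiv.Perm ℤ) : Prop :=
  IsSignedPerm n v ∧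
    ∀ w : Equiv.Perm ℤ, IsSignedPerm n w → w * v⁻¹ ∈ WP_B n → lenB n v ≤ lenB n w

/-- `u` is a maximal length representative of its left coset `W_P u`. -/
def IsMaxRepB (n : ℕ) (u : Equiv.Perm ℤ) : Prop :=
  IsSignedPerm n u ∧
    ∀ w : Equiv.Perm ℤ, IsSignedPerm n w → w * u⁻¹ ∈ WP_B n → lenB n w ≤ lenB n u

theorem Equiv.Perm.apply_inv_self {α : Type*} (f : Equiv.Perm α) (x : α) : f (f⁻¹ x) = x :=
  Equiv.apply_symm_apply f x

theorem Equiv.Perm.inv_apply_self {α : Type*} (f : Equiv.Perm α) (x : α) : f⁻¹ (f x) = x :=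
  Equiv.symm_apply_apply f x

section SignedAux

variable {n : ℕ}

lemma sp_one : IsSignedPerm n 1 := ⟨fun _ => rfl, fun _ _ => rfl⟩

lemma sp_mul {w v : Equiv.Perm ℤ} (hw : IsSignedPerm n w) (hv : IsSignedPerm n v) :
    IsSignedPerm n (w * v) := by
  constructor
  · intro x; simp only [Equiv.Perm.mul_apply, hv.1, hw.1]
  · intro x hx; simp only [Equiv.Perm.mul_apply, hv.2 x hx, hw.2 x hx]

lemma sp_inv {w : Equiv.Perm ℤ} (hw : IsSignedPerm n w) : IsSignedPerm n w⁻¹ := by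
  constructor
  · intro x
    apply w.injective
    rw [Equiv.Perm.apply_inv_self, hw.1, Equiv.Perm.apply_inv_self]
  · intro x hx
    apply w.injective
    rw [Equiv.Perm.apply_inv_self, hw.2 x hx]

lemma sp_zero {w : Equiv.Perm ℤ} (hw : IsSignedPerm n w) : w 0 = 0 := by
  have := hw.1 0
  simp only [neg_zero] at this
  linarith

lemma sp_abs_le {w : Equiv.Perm ℤ} (hw : IsSignedPerm n w) {x : ℤ} (hx : |x| ≤ n) :
    |w x| ≤ n := by
  by_contra h
  push_neg at h
  have := (sp_inv hw).2 (w x) h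
  rw [Equiv.Perm.inv_apply_self] at this
  rw [← this] at h
  omega

lemma sp_ne_zero {w : Equiv.Perm ℤ} (hw : IsSignedPerm n w) {x : ℤ} (hx : x ≠ 0) :
    w x ≠ 0 := by
  intro h
  exact hx (w.injective (h.trans (sp_zero hw).symm))

end SignedAux

section SimpleBAux

variable {n : ℕ}

lemma simpleB_signed {i : ℕ} (h1 : 1 ≤ i) (h2 : i ≤ n) : IsSignedPerm n (simpleB n i) := by
  unfold simpleB
  split_ifs with h
  · subst h
    constructor
    · intro x
      simp only [Equiv.swap_apply_def]
      split_ifs <;> omega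
    · intro x hx
      rw [lt_abs] at hx
      rw [Equiv.swap_apply_of_ne_of_ne] <;> omega
  · constructor
    · intro x
      simp only [Equiv.Perm.mul_apply, Equiv.swap_apply_def]
      split_ifs <;> omega
    · intro x hx
      rw [lt_abs] at hx
      rw [Equiv.Perm.mul_apply,
        Equiv.swap_apply_of_ne_of_ne (x := x) (a := -(i:ℤ)) (b := -(i:ℤ)-1) (by omega) (by omega),
        Equiv.swap_apply_of_ne_of_ne (by omega) (by omega)]

lemma simpleB_apply_other {i : ℕ} (h1 : 1 ≤ i) (h2 : i < n) {x : ℤ}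
    (ha : x ≠ i) (hb : x ≠ (i:ℤ) + 1) (hc : x ≠ -(i:ℤ)) (hd : x ≠ -(i:ℤ) - 1) :
    simpleB n i x = x := by
  unfold simpleB
  rw [if_neg (by omega)]
  rw [Equiv.Perm.mul_apply, Equiv.swap_apply_of_ne_of_ne hc hd,
    Equiv.swap_apply_of_ne_of_ne ha hb]

lemma simpleB_apply_i {i : ℕ} (h1 : 1 ≤ i) (h2 : i < n) :
    simpleB n i (i : ℤ) = (i : ℤ) + 1 := by
  unfold simpleB
  rw [if_neg (by omega)]
  rw [Equiv.Perm.mul_apply, Equiv.swap_apply_of_ne_of_ne (x := (i:ℤ)) (a := -(i:ℤ)) (b := -(i:ℤ)-1) (by omega) (by omega),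
    Equiv.swap_apply_left]

lemma simpleB_apply_i1 {i : ℕ} (h1 : 1 ≤ i) (h2 : i < n) :
    simpleB n i ((i : ℤ) + 1) = (i : ℤ) := by
  unfold simpleB
  rw [if_neg (by omega)]
  rw [Equiv.Perm.mul_apply, Equiv.swap_apply_of_ne_of_ne (x := (i:ℤ)+1) (a := -(i:ℤ)) (b := -(i:ℤ)-1) (by omega) (by omega),
    Equiv.swap_apply_right]

lemma simpleB_n_apply_n : simpleB n n (n : ℤ) = -(n : ℤ) := by
  unfold simpleB
  rw [if_pos rfl, Equiv.swap_apply_left]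

lemma simpleB_n_apply_other {x : ℤ} (ha : x ≠ n) (hb : x ≠ -(n:ℤ)) :
    simpleB n n x = x := by
  unfold simpleB
  rw [if_pos rfl, Equiv.swap_apply_of_ne_of_ne ha hb]

lemma simpleB_mem {i : ℕ} (h1 : 2 ≤ i) (h2 : i ≤ n) : simpleB n i ∈ WP_B n :=
  Subgroup.subset_closure ⟨i, h1, h2, rfl⟩

lemma WP_fix_one {g : Equiv.Perm ℤ} (hg : g ∈ WP_B n) : g 1 = 1 := by
  induction hg using Subgroup.closure_induction'' with
  | one => rfl
  | mem g hg =>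
      obtain ⟨i, h1, h2, rfl⟩ := hg
      rcases eq_or_lt_of_le h2 with h | h
      · subst h
        exact simpleB_n_apply_other (x := 1) (by omega) (by omega)
      · exact simpleB_apply_other (x := 1) (by omega) h (by omega) (by omega) (by omega) (by omega)
  | inv_mem g hg =>
      obtain ⟨i, h1, h2, rfl⟩ := hg
      have : simpleB n i 1 = 1 := by
        rcases eq_or_lt_of_le h2 with h | h
        · subst h
          exact simpleB_n_apply_other (x := 1) (by omega) (by omega)
        · exact simpleB_apply_other (x := 1) (by omega) h (by omega) (by omega) (by omega) (by omega)
      conv_lhs => rw [← this]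
      rw [Equiv.Perm.inv_apply_self]
  | mul a b _ _ ha hb => rw [Equiv.Perm.mul_apply, hb, ha]

end SimpleBAux
section MoveAux

def moveB (n q : ℕ) : ℕ → Equiv.Perm ℤ
  | 0 => 1
  | (r+1) => if r + 1 ≤ q then 1 else moveB n q r * simpleB n r

variable {n q : ℕ}

lemma moveB_fix (hq : 1 ≤ q) : ∀ r, r ≤ n → ∀ x : ℤ, (r : ℤ) < |x| → moveB n q r x = x := by
  intro r
  induction r with
  | zero => intro _ x _; rfl
  | succ r ih =>
      intro hr x hx
      unfold moveB
      split_ifs with h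
      · rfl
      · rw [lt_abs] at hx; push_cast at hx
        rw [Equiv.Perm.mul_apply, simpleB_apply_other (by omega) (by omega)
          (by omega) (by omega) (by omega) (by omega)]
        exact ih (by omega) x (by rw [lt_abs]; omega)

lemma moveB_low (hq : 1 ≤ q) : ∀ r, r ≤ n → ∀ x : ℤ, |x| < (q : ℤ) → moveB n q r x = x := by
  intro r
  induction r with
  | zero => intro _ x _; rfl
  | succ r ih =>
      intro hr x hx
      unfold moveB
      split_ifs with h
      · rfl
      · rw [abs_lt] at hx
        rw [Equiv.Perm.mul_apply, simpleB_apply_other (by omega) (by omega)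
          (by omega) (by omega) (by omega) (by omega)]
        exact ih (by omega) x (by rw [abs_lt]; omega)

lemma moveB_top (hq : 1 ≤ q) : ∀ r, q ≤ r → r ≤ n → moveB n q r (r : ℤ) = q := by
  intro r
  induction r with
  | zero => intro h _; omega
  | succ r ih =>
      intro h1 h2
      unfold moveB
      split_ifs with h
      · have : q = r + 1 := by omega
        simp [this]
      · rw [Equiv.Perm.mul_apply]
        rw [show ((r + 1 : ℕ) : ℤ) = (r : ℤ) + 1 by push_cast; ring,
          simpleB_apply_i1 (by omega) (by omega)]
        exact ih (by omega) (by omega)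

lemma moveB_mid (hq : 1 ≤ q) : ∀ r, r ≤ n → ∀ x : ℤ, (q : ℤ) ≤ x → x < (r : ℤ) →
    moveB n q r x = x + 1 := by
  intro r
  induction r with
  | zero => intro _ x _ h; simp at h; omega
  | succ r ih =>
      intro hr x h1 h2
      unfold moveB
      split_ifs with h
      · exfalso; push_cast at h2; omega
      · rw [Equiv.Perm.mul_apply]
        push_cast at h2
        rcases eq_or_lt_of_le (show x ≤ (r:ℤ) by omega) with he | hlt
        · rw [he, simpleB_apply_i (by omega) (by omega)]
          exact moveB_fix hq r (by omega) _ (by rw [lt_abs]; omega)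
        · rw [simpleB_apply_other (by omega) (by omega) (by omega) (by omega) (by omega)
            (by omega)]
          exact ih (by omega) x h1 hlt

lemma moveB_mem (hq : 2 ≤ q) : ∀ r, r ≤ n → moveB n q r ∈ WP_B n := by
  intro r
  induction r with
  | zero => exact fun _ => one_mem _
  | succ r ih =>
      intro hr
      unfold moveB
      split_ifs with h
      · exact one_mem _
      · exact mul_mem (ih (by omega)) (simpleB_mem (by omega) (by omega))

lemma moveB_signed (hq : 1 ≤ q) : ∀ r, r ≤ n → IsSignedPerm n (moveB n q r) := by
  intro r
  induction r with
  | zero => exact fun _ => sp_one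
  | succ r ih =>
      intro hr
      unfold moveB
      split_ifs with h
      · exact sp_one
      · exact sp_mul (ih (by omega)) (simpleB_signed (by omega) (by omega))

def flipB (n r : ℕ) : Equiv.Perm ℤ := moveB n r n * simpleB n n * (moveB n r n)⁻¹

variable {r : ℕ}

lemma flipB_self (h1 : 1 ≤ r) (h2 : r ≤ n) : flipB n r (r : ℤ) = -(r : ℤ) := by
  unfold flipB
  have htop : moveB n r n (n : ℤ) = r := moveB_top h1 n h2 le_rfl
  have hinv : (moveB n r n)⁻¹ (r : ℤ) = n := by
    rw [← htop, Equiv.Perm.inv_apply_self]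
  rw [Equiv.Perm.mul_apply, Equiv.Perm.mul_apply, hinv, simpleB_n_apply_n]
  have := (moveB_signed h1 n le_rfl).1 (n : ℤ)
  rw [this, htop]

lemma flipB_fix (h1 : 1 ≤ r) (h2 : r ≤ n) {x : ℤ} (ha : x ≠ r) (hb : x ≠ -(r:ℤ)) :
    flipB n r x = x := by
  unfold flipB
  have hsg := moveB_signed (n := n) (q := r) h1 n le_rfl
  have htop : moveB n r n (n : ℤ) = r := moveB_top h1 n h2 le_rfl
  have htopn : moveB n r n (-(n : ℤ)) = -(r:ℤ) := by rw [hsg.1, htop]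
  rw [Equiv.Perm.mul_apply, Equiv.Perm.mul_apply]
  rw [simpleB_n_apply_other, Equiv.Perm.apply_inv_self]
  · intro h
    apply ha
    rw [← htop, ← h, Equiv.Perm.apply_inv_self]
  · intro h
    apply hb
    rw [← htopn, ← h, Equiv.Perm.apply_inv_self]

lemma flipB_mem (h1 : 2 ≤ r) (h2 : r ≤ n) : flipB n r ∈ WP_B n :=
  mul_mem (mul_mem (moveB_mem h1 n le_rfl) (simpleB_mem (by omega) le_rfl))
    (inv_mem (moveB_mem h1 n le_rfl))

lemma flipB_signed (h1 : 1 ≤ r) (h2 : r ≤ n) : IsSignedPerm n (flipB n r) :=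
  sp_mul (sp_mul (moveB_signed h1 n le_rfl) (simpleB_signed (by omega) le_rfl))
    (sp_inv (moveB_signed h1 n le_rfl))

lemma mem_WP_of_fix_one {g : Equiv.Perm ℤ} (hg : IsSignedPerm n g) (h1 : g 1 = 1) :
    g ∈ WP_B n := by
  suffices H : ∀ m : ℕ, ∀ g : Equiv.Perm ℤ, IsSignedPerm n g → g 1 = 1 →
      (∀ x : ℤ, (m : ℤ) < |x| → g x = x) → g ∈ WP_B n by
    exact H n g hg h1 hg.2
  intro m
  induction m with
  | zero =>
      intro g hg h1 hs
      have : g = 1 := by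
        ext x
        rcases lt_trichotomy x 0 with h | h | h
        · exact hs x (by rw [lt_abs]; omega)
        · simp [h, sp_zero hg]
        · exact hs x (by rw [lt_abs]; omega)
      rw [this]; exact one_mem _
  | succ m ih =>
      intro g hg h1 hs
      by_cases hn : n ≤ m
      · exact ih g hg h1 (fun x hx => hg.2 x (by omega))
      by_cases hm : m = 0
      · subst hm
        have : g = 1 := by
          ext x
          rcases lt_trichotomy x 0 with h | h | h
          · rcases eq_or_lt_of_le (show x ≤ -1 by omega) with he | hlt
            · rw [he]
              have h2 := hg.1 1
              rw [h1] at h2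
              simpa using h2
            · exact hs x (by rw [lt_abs]; push_cast; omega)
          · simp [h, sp_zero hg]
          · rcases eq_or_lt_of_le (show 1 ≤ x by omega) with he | hlt
            · rw [← he]; exact h1
            · exact hs x (by rw [lt_abs]; push_cast; omega)
        rw [this]; exact one_mem _
      have hm2 : 2 ≤ m + 1 := by omega
      have hmn : m + 1 ≤ n := by omega
      set p : ℤ := g.symm ((m : ℤ) + 1) with hp
      have hgp : g p = (m : ℤ) + 1 := Equiv.apply_symm_apply _ _
      have hpb : |p| ≤ (m : ℤ) + 1 := by
        by_contra hc
        push_neg at hc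
        have := hs p (by push_cast; omega)
        rw [this] at hgp
        rcases abs_cases p with ⟨h, _⟩ | ⟨h, _⟩ <;> omega
      have hpne0 : p ≠ 0 := by
        intro h; rw [h, sp_zero hg] at hgp; omega
      have hpne1 : p ≠ 1 := by
        intro h; rw [h, h1] at hgp; omega
      have hpnem1 : p ≠ -1 := by
        intro h
        have hgm1 : g (-1) = -1 := by
          have h2 := hg.1 1; rw [h1] at h2; simpa using h2
        rw [h, hgm1] at hgp; omega
      set qn : ℕ := p.natAbs with hqn
      have hqcast : (qn : ℤ) = |p| := Int.natCast_natAbs p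
      have habs2 : 2 ≤ |p| := by
        rcases abs_cases p with ⟨h, _⟩ | ⟨h, _⟩ <;> omega
      have hq2 : 2 ≤ qn := by omega
      have hqm : qn ≤ m + 1 := by omega
      obtain ⟨c, hcmem, hcsg, hcm1, hc1, hcfix⟩ :
          ∃ c : Equiv.Perm ℤ, c ∈ WP_B n ∧ IsSignedPerm n c ∧ c ((m:ℤ)+1) = p ∧ c 1 = 1 ∧
            ∀ x : ℤ, (m:ℤ)+1 < |x| → c x = x := by
        have hmtop : moveB n qn (m+1) ((m:ℤ)+1) = qn := by
          have := moveB_top (n := n) (q := qn) (by omega) (m+1) hqm hmn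
          push_cast at this
          exact this
        by_cases hppos : 0 < p
        · refine ⟨moveB n qn (m+1), moveB_mem hq2 (m+1) hmn, moveB_signed (by omega) (m+1) hmn,
            ?_, ?_, ?_⟩
          · rw [hmtop]; omega
          · exact moveB_low (by omega) (m+1) hmn 1 (by rw [abs_lt]; omega)
          · intro x hx
            rw [lt_abs] at hx
            exact moveB_fix (by omega) (m+1) hmn x (by rw [lt_abs]; push_cast; omega)
        · refine ⟨moveB n qn (m+1) * flipB n (m+1),
            mul_mem (moveB_mem hq2 (m+1) hmn) (flipB_mem hm2 hmn),
            sp_mul (moveB_signed (by omega) (m+1) hmn) (flipB_signed (by omega) hmn), ?_, ?_, ?_⟩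
          · rw [Equiv.Perm.mul_apply]
            have hf : flipB n (m+1) ((m:ℤ)+1) = -((m:ℤ)+1) := by
              have := flipB_self (n := n) (r := m+1) (by omega) hmn
              push_cast at this
              exact this
            rw [hf]
            have hodd := (moveB_signed (n := n) (q := qn) (by omega) (m+1) hmn).1 ((m:ℤ)+1)
            rw [hodd, hmtop]
            omega
          · rw [Equiv.Perm.mul_apply]
            rw [flipB_fix (by omega) hmn (by push_cast; omega) (by push_cast; omega)]
            exact moveB_low (by omega) (m+1) hmn 1 (by rw [abs_lt]; omega)
          · intro x hx
            rw [lt_abs] at hx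
            rw [Equiv.Perm.mul_apply]
            rw [flipB_fix (by omega) hmn (by push_cast; omega) (by push_cast; omega)]
            exact moveB_fix (by omega) (m+1) hmn x (by rw [lt_abs]; push_cast; omega)
      have hkey : (g * c) ((m:ℤ)+1) = (m:ℤ)+1 := by
        rw [Equiv.Perm.mul_apply, hcm1, hgp]
      have hsupp : ∀ x : ℤ, (m : ℤ) < |x| → (g * c) x = x := by
        intro x hx
        by_cases hbig : (m:ℤ)+1 < |x|
        · rw [Equiv.Perm.mul_apply, hcfix x hbig]
          exact hs x (by push_cast; omega)
        · rcases abs_cases x with ⟨ha, hb⟩ | ⟨ha, hb⟩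
          · have : x = (m:ℤ)+1 := by omega
            rw [this]; exact hkey
          · have : x = -((m:ℤ)+1) := by omega
            rw [this, (sp_mul hg hcsg).1, hkey]
      have hWP : g * c ∈ WP_B n :=
        ih (g * c) (sp_mul hg hcsg) (by rw [Equiv.Perm.mul_apply, hc1, h1]) hsupp
      have : g = (g * c) * c⁻¹ := by group
      rw [this]
      exact mul_mem hWP (inv_mem hcmem)

end MoveAux
section MaxRepAux

variable {n : ℕ}

def negWin (n : ℕ) : Equiv.Perm ℤ :=
  Function.Involutive.toPerm (fun x => if |x| ≤ (n:ℤ) then -x else x)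
    (by
      intro x
      by_cases h : |x| ≤ (n:ℤ) <;> simp [h, abs_neg])

lemma negWin_apply_le {x : ℤ} (h : |x| ≤ (n:ℤ)) : negWin n x = -x := by
  change (if |x| ≤ (n:ℤ) then -x else x) = -x
  rw [if_pos h]

lemma negWin_apply_gt {x : ℤ} (h : (n:ℤ) < |x|) : negWin n x = x := by
  change (if |x| ≤ (n:ℤ) then -x else x) = x
  rw [if_neg (by omega : ¬ |x| ≤ (n:ℤ))]

lemma negWin_signed : IsSignedPerm n (negWin n) := by
  constructor
  · intro x
    by_cases h : |x| ≤ (n:ℤ)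
    · rw [negWin_apply_le (by rw [abs_neg]; exact h), negWin_apply_le h]
    · push_neg at h
      rw [negWin_apply_gt (by rw [abs_neg]; exact h), negWin_apply_gt h]
  · intro x hx
    exact negWin_apply_gt hx

lemma swap1_signed (hn : 1 ≤ n) : IsSignedPerm n (Equiv.swap 1 (-1)) := by
  constructor
  · intro x
    simp only [Equiv.swap_apply_def]
    split_ifs <;> omega
  · intro x hx
    rw [lt_abs] at hx
    rw [Equiv.swap_apply_of_ne_of_ne (x := x) (a := 1) (b := -1) (by omega) (by omega)]

def maxRep (n : ℕ) (c : ℤ) : Equiv.Perm ℤ :=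
  (if 0 < c then Equiv.swap 1 (-1) else 1) * negWin n * moveB n 1 c.natAbs

variable {c : ℤ}

lemma maxRep_signed (hc1 : 1 ≤ |c|) (hc2 : |c| ≤ (n:ℤ)) : IsSignedPerm n (maxRep n c) := by
  have hcast : (c.natAbs : ℤ) = |c| := Int.natCast_natAbs c
  unfold maxRep
  refine sp_mul (sp_mul ?_ negWin_signed)
    (moveB_signed (n := n) (q := 1) (by omega) c.natAbs (by omega))
  split_ifs
  · exact swap1_signed (by omega)
  · exact sp_one

lemma maxRep_apply_lt (hc2 : |c| ≤ (n:ℤ)) {a : ℤ} (h1 : 1 ≤ a) (h2 : a < |c|) :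
    maxRep n c a = -(a+1) := by
  have hcast : (c.natAbs : ℤ) = |c| := Int.natCast_natAbs c
  unfold maxRep
  rw [Equiv.Perm.mul_apply, Equiv.Perm.mul_apply]
  rw [moveB_mid (n := n) (q := 1) (by omega) c.natAbs (by omega) a (by omega)
    (by omega)]
  rw [negWin_apply_le (by rw [abs_le]; omega)]
  split_ifs
  · rw [Equiv.swap_apply_of_ne_of_ne (by omega) (by omega)]
  · rfl

lemma maxRep_apply_abs (hc1 : 1 ≤ |c|) (hc2 : |c| ≤ (n:ℤ)) :
    maxRep n c |c| = (if 0 < c then 1 else -1) := by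
  have hcast : (c.natAbs : ℤ) = |c| := Int.natCast_natAbs c
  unfold maxRep
  rw [Equiv.Perm.mul_apply, Equiv.Perm.mul_apply]
  rw [show |c| = ((c.natAbs : ℕ) : ℤ) by omega]
  rw [moveB_top (n := n) (q := 1) (by omega) c.natAbs (by omega) (by omega)]
  rw [show ((1:ℕ):ℤ) = (1:ℤ) by norm_num]
  rw [negWin_apply_le (by rw [abs_one]; omega)]
  split_ifs
  · rw [Equiv.swap_apply_right]
  · rfl

lemma maxRep_apply_gt (hc2 : |c| ≤ (n:ℤ)) {a : ℤ} (h1 : |c| < a) (h2 : a ≤ (n:ℤ)) :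
    maxRep n c a = -a := by
  have hcast : (c.natAbs : ℤ) = |c| := Int.natCast_natAbs c
  unfold maxRep
  rw [Equiv.Perm.mul_apply, Equiv.Perm.mul_apply]
  rw [moveB_fix (n := n) (q := 1) (by omega) c.natAbs (by omega) a (by rw [lt_abs]; omega)]
  rw [negWin_apply_le (by rw [abs_le]; omega)]
  split_ifs
  · rw [Equiv.swap_apply_of_ne_of_ne (by omega) (by omega)]
  · rfl

lemma maxRep_apply_c (hc1 : 1 ≤ |c|) (hc2 : |c| ≤ (n:ℤ)) : maxRep n c c = 1 := by
  by_cases h : 0 < c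
  · have h2 := maxRep_apply_abs (n := n) hc1 hc2
    rw [if_pos h, abs_of_pos h] at h2
    exact h2
  · have hodd := (maxRep_signed (n := n) (c := c) hc1 hc2).1 |c|
    rw [maxRep_apply_abs hc1 hc2, if_neg h] at hodd
    have hceq : -|c| = c := by rcases abs_cases c with ⟨h', _⟩ | ⟨h', _⟩ <;> omega
    rw [hceq] at hodd
    rw [hodd]
    norm_num

lemma maxRep_symm_one (hc1 : 1 ≤ |c|) (hc2 : |c| ≤ (n:ℤ)) : (maxRep n c).symm 1 = c := by
  rw [Equiv.symm_apply_eq, maxRep_apply_c hc1 hc2]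

lemma maxRep_symm_neg (hc1 : 1 ≤ |c|) (hc2 : |c| ≤ (n:ℤ)) {k : ℤ} (h1 : 2 ≤ k)
    (h2 : k ≤ (n:ℤ)) :
    (maxRep n c).symm (-k) = if k ≤ |c| then k - 1 else k := by
  rw [Equiv.symm_apply_eq]
  split_ifs with h
  · rw [maxRep_apply_lt hc2 (by omega) (by omega)]
    omega
  · rw [maxRep_apply_gt hc2 (by omega) h2]

end MaxRepAux
section UniqueAux

variable {n : ℕ} {c : ℤ}

lemma lenB_eq_sum (n : ℕ) (w : Equiv.Perm ℤ) :
    lenB n w = ∑ q ∈ Finset.Icc (1:ℤ) (n:ℤ) ×ˢ Finset.Icc (1:ℤ) (n:ℤ),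
      ((if q.1 < q.2 ∧ w q.2 < w q.1 then 1 else 0) +
       (if q.1 ≤ q.2 ∧ w q.1 + w q.2 < 0 then 1 else 0)) := by
  unfold lenB
  rw [Finset.card_filter, Finset.card_filter, ← Finset.sum_add_distrib]

lemma eq_maxRep (hc1 : 1 ≤ |c|) (hc2 : |c| ≤ (n:ℤ)) {w : Equiv.Perm ℤ}
    (hw : IsSignedPerm n w) (hwc : w.symm 1 = c)
    (hpos : ∀ k : ℤ, 2 ≤ k → k ≤ (n:ℤ) → 0 < w.symm (-k))
    (hmono : ∀ k : ℤ, 2 ≤ k → k + 1 ≤ (n:ℤ) → w.symm (-k) < w.symm (-(k+1))) :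
    w = maxRep n c := by
  have hwsym : IsSignedPerm n w.symm := sp_inv hw
  have hM := maxRep_signed (n := n) (c := c) hc1 hc2
  have hMsym : IsSignedPerm n (maxRep n c).symm := sp_inv hM
  have hrb : ∀ k : ℤ, 2 ≤ k → k ≤ (n:ℤ) → w.symm (-k) ≤ (n:ℤ) := by
    intro k h1 h2
    have hb := sp_abs_le hwsym (x := -k) (by rw [abs_le]; omega)
    rcases abs_cases (w.symm (-k)) with ⟨h, _⟩ | ⟨h, _⟩ <;> omega
  have hchain : ∀ d : ℕ, ∀ k : ℤ, 2 ≤ k → k + d ≤ (n:ℤ) →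
      w.symm (-k) + d ≤ w.symm (-(k + d)) := by
    intro d
    induction d with
    | zero => intro k _ _; simp
    | succ d ih =>
        intro k h1 h2
        push_cast at h2 ⊢
        have h3 := ih k h1 (by push_cast; omega)
        have h4 := hmono (k + d) (by omega) (by omega)
        push_cast at h3
        rw [show k + ((d:ℤ) + 1) = (k + d) + 1 by ring]
        omega
  have hchain' : ∀ k k' : ℤ, 2 ≤ k → k ≤ k' → k' ≤ (n:ℤ) →
      w.symm (-k) + (k' - k) ≤ w.symm (-k') := by
    intro k k' h1 h2 h3
    have := hchain (k' - k).toNat k h1 (by omega)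
    rw [show ((k' - k).toNat : ℤ) = k' - k by omega] at this
    rw [show k + (k' - k) = k' by ring] at this
    omega
  have hwp1 : w |c| = (if 0 < c then 1 else -1) := by
    have h1 : w c = 1 := by rw [← hwc, Equiv.apply_symm_apply]
    split_ifs with h
    · rw [abs_of_pos h]; exact h1
    · have h2 : w (-c) = -1 := by rw [hw.1, h1]
      rw [show |c| = -c by rcases abs_cases c with ⟨h', _⟩ | ⟨h', _⟩ <;> omega]
      exact h2
  have hne_p : ∀ k : ℤ, 2 ≤ k → w.symm (-k) ≠ |c| := by
    intro k hk h
    have h2 : w |c| = -k := by rw [← h, Equiv.apply_symm_apply]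
    rw [hwp1] at h2
    split_ifs at h2 <;> omega
  have hval : ∀ k : ℤ, 2 ≤ k → k ≤ (n:ℤ) → w.symm (-k) = if k ≤ |c| then k - 1 else k := by
    intro k h2 hkn
    have hrn : w.symm (-(n:ℤ)) ≤ (n:ℤ) := hrb n (by omega) le_rfl
    have hub : w.symm (-k) ≤ k := by
      have := hchain' k n h2 hkn le_rfl
      omega
    have hlb : k - 1 ≤ w.symm (-k) := by
      have := hchain' 2 k le_rfl h2 hkn
      have h3 := hpos 2 le_rfl (by omega)
      omega
    split_ifs with h
    · by_contra hne
      have hrk : w.symm (-k) = k := by omega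
      have h5 := hchain' k |c| h2 h hc2
      have h6 : w.symm (-|c|) ≤ |c| := by
        have := hchain' |c| n (by omega) hc2 le_rfl
        omega
      exact hne_p |c| (by omega) (by omega)
    · by_contra hne
      have hrk : w.symm (-k) = k - 1 := by omega
      have h5 := hchain' (|c| + 1) k (by omega) (by omega) hkn
      have h6 : |c| ≤ w.symm (-(|c| + 1)) := by
        have h7 := hchain' 2 (|c| + 1) le_rfl (by omega) (by omega)
        have h8 := hpos 2 le_rfl (by omega)
        omega
      exact hne_p (|c| + 1) (by omega) (by omega)
  have hagree : ∀ y : ℤ, 1 ≤ y → w.symm (-y) = (maxRep n c).symm (-y) := by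
    intro y hy
    by_cases hyn : (n:ℤ) < y
    · have e1 : w.symm (-y) = -y := hwsym.2 (-y) (by rw [abs_neg, abs_of_pos (by omega)]; omega)
      have e2 : (maxRep n c).symm (-y) = -y :=
        hMsym.2 (-y) (by rw [abs_neg, abs_of_pos (by omega)]; omega)
      rw [e1, e2]
    rcases eq_or_lt_of_le hy with he | hlt
    · rw [← he]
      rw [show (-1 : ℤ) = -(1:ℤ) by norm_num, hwsym.1 1, hMsym.1 1, hwc,
        maxRep_symm_one hc1 hc2]
    · rw [hval y (by omega) (by omega), maxRep_symm_neg hc1 hc2 (by omega) (by omega)]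
  have hsymm_eq : w.symm = (maxRep n c).symm := by
    ext x
    rcases lt_trichotomy x 0 with hx | hx | hx
    · simpa using hagree (-x) (by omega)
    · rw [hx, sp_zero hwsym, sp_zero hMsym]
    · have h1 := hwsym.1 x
      have h2 := hMsym.1 x
      have h3 := hagree x (by omega)
      omega
  have := congrArg Equiv.symm hsymm_eq
  simpa using this

end UniqueAux
section KeyIneq

variable {n : ℕ} {c : ℤ}

lemma len_lt_maxRep (hc1 : 1 ≤ |c|) (hc2 : |c| ≤ (n:ℤ)) {w : Equiv.Perm ℤ}
    (hw : IsSignedPerm n w) (hwc : w.symm 1 = c) (hne : w ≠ maxRep n c) :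
    lenB n w < lenB n (maxRep n c) := by
  have hM := maxRep_signed (n := n) (c := c) hc1 hc2
  have hwsym : IsSignedPerm n w.symm := sp_inv hw
  set p : ℤ := |c| with hp
  have hwp1 : w p = (if 0 < c then 1 else -1) := by
    have h1 : w c = 1 := by rw [← hwc, Equiv.apply_symm_apply]
    split_ifs with h
    · rw [hp, abs_of_pos h]; exact h1
    · have h2 : w (-c) = -1 := by rw [hw.1, h1]
      rw [hp, show |c| = -c by rcases abs_cases c with ⟨h', _⟩ | ⟨h', _⟩ <;> omega]
      exact h2
  have hMp1 : maxRep n c p = (if 0 < c then 1 else -1) := maxRep_apply_abs hc1 hc2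
  have hε : (w p = 1 ∧ maxRep n c p = 1) ∨ (w p = -1 ∧ maxRep n c p = -1) := by
    split_ifs at hwp1 hMp1 with h
    · exact Or.inl ⟨hwp1, hMp1⟩
    · exact Or.inr ⟨hwp1, hMp1⟩
  have hMval : ∀ a : ℤ, 1 ≤ a → a ≤ (n:ℤ) → a ≠ p →
      (maxRep n c a = -(a+1) ∧ a < p) ∨ (maxRep n c a = -a ∧ p < a) := by
    intro a h1 h2 h3
    rcases lt_trichotomy a p with h | h | h
    · exact Or.inl ⟨maxRep_apply_lt hc2 h1 h, h⟩
    · exact absurd h h3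
    · exact Or.inr ⟨maxRep_apply_gt hc2 h h2, h⟩
  have hp1 : 1 ≤ p := hc1
  rw [lenB_eq_sum, lenB_eq_sum]
  apply Finset.sum_lt_sum
  · rintro ⟨a, b⟩ hab
    rw [Finset.mem_product, Finset.mem_Icc, Finset.mem_Icc] at hab
    obtain ⟨⟨ha1, ha2⟩, hb1, hb2⟩ := hab
    dsimp only
    rcases lt_trichotomy a b with h | h | h
    · by_cases hbp : b = p
      · subst hbp
        have hMa : maxRep n c a = -(a+1) := maxRep_apply_lt hc2 ha1 h
        have hwa : w a ≠ 0 := sp_ne_zero hw (by omega)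
        rcases hε with ⟨e1, e2⟩ | ⟨e1, e2⟩ <;> rw [hMa, e1, e2] <;> split_ifs <;> omega
      · by_cases hap : a = p
        · subst hap
          rcases hMval b hb1 hb2 hbp with ⟨e2, _⟩ | ⟨e2, _⟩ <;>
            rcases hε with ⟨e1, e3⟩ | ⟨e1, e3⟩ <;> rw [e2, e3] <;> split_ifs <;> omega
        · rcases hMval a ha1 ha2 hap with ⟨e1, f1⟩ | ⟨e1, f1⟩ <;>
            rcases hMval b hb1 hb2 hbp with ⟨e2, f2⟩ | ⟨e2, f2⟩ <;>
            rw [e1, e2] <;> split_ifs <;> omega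
    · subst h
      by_cases hap : a = p
      · subst hap
        rcases hε with ⟨e1, e2⟩ | ⟨e1, e2⟩ <;> rw [e1, e2] <;> split_ifs <;> omega
      · rcases hMval a ha1 ha2 hap with ⟨e, f⟩ | ⟨e, f⟩ <;> rw [e] <;> split_ifs <;> omega
    · split_ifs <;> omega
  · -- strict somewhere
    by_cases hall : ∀ a : ℤ, 1 ≤ a → a ≤ (n:ℤ) → a ≠ p → w a < 0
    · by_cases hdec : ∀ a b : ℤ, 1 ≤ a → a < b → b ≤ (n:ℤ) → a ≠ p → b ≠ p → w b < w a
      · exfalso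
        apply hne
        have HPOS : ∀ k : ℤ, 2 ≤ k → k ≤ (n:ℤ) → 0 < w.symm (-k) := by
          intro k h2k hkn
          have haw : w (w.symm (-k)) = -k := Equiv.apply_symm_apply w _
          set a : ℤ := w.symm (-k) with ha
          have ha0 : a ≠ 0 := by
            intro hz; rw [hz, sp_zero hw] at haw; omega
          have hab : |a| ≤ (n:ℤ) := sp_abs_le hwsym (by rw [abs_neg, abs_of_pos (by omega)]; omega)
          have hanp : a ≠ -p := by
            intro hz
            have h1 := hw.1 p
            rw [← hz, haw] at h1
            rcases hε with ⟨e1, _⟩ | ⟨e1, _⟩ <;> rw [e1] at h1 <;> omega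
          by_contra hneg
          push_neg at hneg
          have habs : |a| = -a := abs_of_neg (by omega)
          have h4 : w (-a) = k := by
            rw [hw.1 a, haw]; omega
          have := hall (-a) (by omega) (by omega) (by omega)
          omega
        apply eq_maxRep hc1 hc2 hw hwc HPOS
        intro k h2k hk1n
        have haw : w (w.symm (-k)) = -k := Equiv.apply_symm_apply w _
        have hbw : w (w.symm (-(k+1))) = -(k+1) := Equiv.apply_symm_apply w _
        set a : ℤ := w.symm (-k) with ha
        set b : ℤ := w.symm (-(k+1)) with hb
        have hak : 0 < a := HPOS k h2k (by omega)
        have hbk : 0 < b := HPOS (k+1) (by omega) hk1n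
        have haab : |a| ≤ (n:ℤ) := sp_abs_le hwsym (by rw [abs_neg, abs_of_pos (by omega)]; omega)
        have hbab : |b| ≤ (n:ℤ) := sp_abs_le hwsym (by rw [abs_neg, abs_of_pos (by omega)]; omega)
        have haabs : |a| = a := abs_of_pos hak
        have hbabs : |b| = b := abs_of_pos hbk
        have hap : a ≠ p := by
          intro hz
          rw [hz] at haw
          rcases hε with ⟨e1, _⟩ | ⟨e1, _⟩ <;> rw [e1] at haw <;> omega
        have hbp : b ≠ p := by
          intro hz
          rw [hz] at hbw
          rcases hε with ⟨e1, _⟩ | ⟨e1, _⟩ <;> rw [e1] at hbw <;> omega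
        rcases lt_trichotomy a b with h | h | h
        · exact h
        · exfalso
          rw [h, hbw] at haw
          omega
        · exfalso
          have := hdec b a (by omega) h (by omega) hbp hap
          rw [haw, hbw] at this
          omega
      · push_neg at hdec
        obtain ⟨a, b, h1, h2, h3, h4, h5, h6⟩ := hdec
        refine ⟨(a, b), Finset.mem_product.mpr
          ⟨Finset.mem_Icc.mpr ⟨h1, by omega⟩, Finset.mem_Icc.mpr ⟨by omega, h3⟩⟩, ?_⟩
        dsimp only
        rcases hMval a h1 (by omega) h4 with ⟨e1, f1⟩ | ⟨e1, f1⟩ <;>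
          rcases hMval b (by omega) h3 h5 with ⟨e2, f2⟩ | ⟨e2, f2⟩ <;>
          rw [e1, e2] <;> split_ifs <;> omega
    · push_neg at hall
      obtain ⟨a, h1, h2, h3, h4⟩ := hall
      have h5 : w a ≠ 0 := sp_ne_zero hw (by omega)
      refine ⟨(a, a), Finset.mem_product.mpr
        ⟨Finset.mem_Icc.mpr ⟨h1, h2⟩, Finset.mem_Icc.mpr ⟨h1, h2⟩⟩, ?_⟩
      dsimp only
      rcases hMval a h1 h2 h3 with ⟨e, f⟩ | ⟨e, f⟩ <;> rw [e] <;> split_ifs <;> omega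

end KeyIneq

/-- the maximal length representative of a left coset `W_P w` in
`Bₙ` is the unique element of the coset whose one-line notation has the values
`-2,-3,…,-n` appearing in that order. -/
theorem maxRep_iff_neg_two_to_n_in_order (n : ℕ) (u : Equiv.Perm ℤ)
    (hu : IsSignedPerm n u) :
    (∀ w : Equiv.Perm ℤ, IsSignedPerm n w → w * u⁻¹ ∈ WP_B n → w ≠ u →
        lenB n w < lenB n u) ↔
      ((∀ k : ℤ, 2 ≤ k → k ≤ (n : ℤ) → 0 < u.symm (-k)) ∧
       (∀ k : ℤ, 2 ≤ k → k + 1 ≤ (n : ℤ) → u.symm (-k) < u.symm (-(k + 1)))) := by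
  by_cases hn : n = 0
  · subst hn
    have hone : ∀ g : Equiv.Perm ℤ, IsSignedPerm 0 g → g = 1 := by
      intro g hg
      ext x
      rcases eq_or_ne x 0 with h | h
      · rw [h, sp_zero hg]; rfl
      · rw [hg.2 x (by rcases abs_cases x with ⟨h', _⟩ | ⟨h', _⟩ <;> omega)]; rfl
    constructor
    · intro _
      constructor <;> intro k hk hk' <;> (exfalso; push_cast at hk'; omega)
    · intro _ w hw _ hne
      exact absurd ((hone w hw).trans (hone u hu).symm) hne
  · have hn1 : 1 ≤ n := Nat.one_le_iff_ne_zero.mpr hn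
    have husym : IsSignedPerm n u.symm := sp_inv hu
    set c : ℤ := u.symm 1 with hcdef
    have hc0 : c ≠ 0 := by
      intro h
      have : u c = 1 := by rw [hcdef, Equiv.apply_symm_apply]
      rw [h, sp_zero hu] at this
      omega
    have hc2 : |c| ≤ (n:ℤ) := by
      have := sp_abs_le husym (x := 1) (by rw [abs_one]; exact_mod_cast hn1)
      exact this
    have hc1 : 1 ≤ |c| := by
      rcases abs_cases c with ⟨h, _⟩ | ⟨h, _⟩ <;> omega
    constructor
    · intro hmax
      have hueq : u = maxRep n c := by
        by_contra hne
        have hmem : maxRep n c * u⁻¹ ∈ WP_B n := by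
          apply mem_WP_of_fix_one (sp_mul (maxRep_signed hc1 hc2) (sp_inv hu))
          have : (u⁻¹ : Equiv.Perm ℤ) 1 = c := hcdef.symm
          rw [Equiv.Perm.mul_apply, this, maxRep_apply_c hc1 hc2]
        have h1 := hmax (maxRep n c) (maxRep_signed hc1 hc2) hmem (Ne.symm hne)
        have h2 := len_lt_maxRep hc1 hc2 hu rfl hne
        omega
      constructor
      · intro k h1 h2
        rw [hueq, maxRep_symm_neg hc1 hc2 h1 h2]
        split_ifs <;> omega
      · intro k h1 h2
        rw [hueq, maxRep_symm_neg hc1 hc2 h1 (by omega),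
          maxRep_symm_neg hc1 hc2 (k := k+1) (by omega) h2]
        split_ifs <;> omega
    · rintro ⟨hpos, hmono⟩ w hw hmem hne
      have hueq : u = maxRep n c := eq_maxRep hc1 hc2 hu rfl hpos hmono
      have hwc : w.symm 1 = c := by
        have hfix := WP_fix_one hmem
        rw [Equiv.Perm.mul_apply] at hfix
        have : (u⁻¹ : Equiv.Perm ℤ) 1 = c := hcdef.symm
        rw [this] at hfix
        rw [← hfix, Equiv.symm_apply_apply]
      rw [hueq]
      exact len_lt_maxRep hc1 hc2 hw hwc (by rw [← hueq]; exact hne)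
end

section
/- Every symmetric (2,2n-1)-clan (a string of length 2n+1) satisfies exactly one of the following: (a) it consists of 2 plus signs and 2n-1 minus signs; (b) it consists of 2 pairs of matching natural numbers and 2n-3 minus signs, with the numbers forming one of the patterns (1,1,2,2), (1,2,1,2), or (1,2,2,1); (c) it consists of 1 pair of matching natural numbers, one plus sign located in the middle position n+1, and 2n-2 minus signs. -/
/-- A clan of length `N`: each position carries a sign (`some true` = `+`,
`some false` = `-`) or is numeric (`none`), and the numeric positions are
matched in pairs by the fixed-point-free (on numeric positions) involution
`mate`.  Identifying clans up to renaming of the natural numbers, only this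
matching matters. -/
structure Clan (N : ℕ) where
  sign : Fin N → Option Bool
  mate : Fin N → Fin N
  mate_invol : ∀ i, mate (mate i) = i
  mate_fix : ∀ i, sign i ≠ none → mate i = i
  mate_ne : ∀ i, sign i = none → mate i ≠ i

/-- The set of positions of `+` signs. -/
def Clan.plusSet {N : ℕ} (γ : Clan N) : Finset (Fin N) :=
  Finset.univ.filter (fun i => γ.sign i = some true)

/-- The set of positions of `-` signs. -/
def Clan.minusSet {N : ℕ} (γ : Clan N) : Finset (Fin N) :=
  Finset.univ.filter (fun i => γ.sign i = some false)

/-- The set of numeric positions. -/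
def Clan.numSet {N : ℕ} (γ : Clan N) : Finset (Fin N) :=
  Finset.univ.filter (fun i => γ.sign i = none)

/-- A clan is a `(2,q)`-clan when `#(+) - #(-) = 2 - q`. -/
def IsClan2 (q : ℕ) {N : ℕ} (γ : Clan N) : Prop :=
  (γ.plusSet.card : ℤ) - (γ.minusSet.card : ℤ) = 2 - (q : ℤ)

/-- A clan is symmetric if reversing its string of characters gives the same
clan: signs are preserved under `i ↦ N+1-i` and matched pairs go to matched
pairs. -/
def Clan.IsSymmetric {N : ℕ} (γ : Clan N) : Prop :=
  (∀ i, γ.sign i.rev = γ.sign i) ∧ ∀ i, γ.mate i.rev = (γ.mate i).rev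

/-- Type (a) symmetric `(2,2n-1)`-clan: 2 plus signs and `2n-1` minus signs. -/
def TypeA_oddLen (n : ℕ) (γ : Clan (2 * n + 1)) : Prop :=
  γ.plusSet.card = 2 ∧ γ.minusSet.card = 2 * n - 1 ∧ γ.numSet = ∅

/-- Type (b) symmetric `(2,2n-1)`-clan: 2 pairs of matching numbers and `2n-3`
minus signs, with the numbers in one of the patterns `(1,1,2,2)`, `(1,2,1,2)`,
`(1,2,2,1)`. -/
def TypeB_oddLen (n : ℕ) (γ : Clan (2 * n + 1)) : Prop :=
  γ.plusSet.card = 0 ∧ γ.minusSet.card = 2 * n - 3 ∧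
    ∃ p1 p2 p3 p4 : Fin (2 * n + 1), p1 < p2 ∧ p2 < p3 ∧ p3 < p4 ∧
      γ.numSet = {p1, p2, p3, p4} ∧
      ((γ.mate p1 = p2 ∧ γ.mate p3 = p4) ∨
       (γ.mate p1 = p3 ∧ γ.mate p2 = p4) ∨
       (γ.mate p1 = p4 ∧ γ.mate p2 = p3))

/-- Type (c) symmetric `(2,2n-1)`-clan: 1 pair of matching numbers, a plus
sign in the middle position `n+1`, and `2n-2` minus signs. -/
def TypeC_oddLen (n : ℕ) (hn : 2 ≤ n) (γ : Clan (2 * n + 1)) : Prop :=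
  γ.numSet.card = 2 ∧ γ.plusSet.card = 1 ∧ γ.minusSet.card = 2 * n - 2 ∧
    γ.sign ⟨n, by omega⟩ = some true

lemma Clan.mate_num {N : ℕ} (γ : Clan N) {i : Fin N} (h : γ.sign i = none) :
    γ.sign (γ.mate i) = none := by
  by_contra h'
  have h2 := γ.mate_fix _ h'
  have h3 := γ.mate_invol i
  exact γ.mate_ne i h (h2.symm.trans h3)

lemma Clan.card_sum {N : ℕ} (γ : Clan N) :
    γ.plusSet.card + γ.minusSet.card + γ.numSet.card = N := by
  classical
  have hu : γ.plusSet ∪ γ.minusSet ∪ γ.numSet = Finset.univ := by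
    ext i
    simp only [Clan.plusSet, Clan.minusSet, Clan.numSet, Finset.mem_union,
      Finset.mem_filter, Finset.mem_univ, true_and]
    rcases h : γ.sign i with _ | b
    · tauto
    · cases b <;> simp
  have d1 : Disjoint γ.plusSet γ.minusSet := by
    rw [Finset.disjoint_left]
    intro a ha hb
    simp only [Clan.plusSet, Clan.minusSet, Finset.mem_filter, Finset.mem_univ, true_and] at ha hb
    rw [ha] at hb; exact (by simp at hb)
  have d2 : Disjoint (γ.plusSet ∪ γ.minusSet) γ.numSet := by
    rw [Finset.disjoint_left]
    intro a ha hb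
    simp only [Clan.plusSet, Clan.minusSet, Clan.numSet, Finset.mem_union,
      Finset.mem_filter, Finset.mem_univ, true_and] at ha hb
    rcases ha with h | h <;> rw [h] at hb <;> simp at hb
  have := Finset.card_union_of_disjoint d2
  rw [hu, Finset.card_union_of_disjoint d1] at this
  simpa [Finset.card_univ] using this.symm

lemma resolve4 {α : Type*} [DecidableEq α] {f : α → α} {a b c d : α}
    (hinv : ∀ x, f (f x) = x)
    (hab : a ≠ b) (hac : a ≠ c) (_had : a ≠ d) (hbc : b ≠ c) (hbd : b ≠ d) (_hcd : c ≠ d)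
    (hmem : ∀ x ∈ ({a, b, c, d} : Finset α), f x ∈ ({a, b, c, d} : Finset α))
    (hne : ∀ x ∈ ({a, b, c, d} : Finset α), f x ≠ x) :
    (f a = b ∧ f c = d) ∨ (f a = c ∧ f b = d) ∨ (f a = d ∧ f b = c) := by
  have key : ∀ x y : α, f x = y → f y = x := fun x y h => by rw [← h, hinv]
  have ha := hmem a (by simp)
  have hb := hmem b (by simp)
  have hc := hmem c (by simp)
  have hna := hne a (by simp)
  have hnb := hne b (by simp)
  have hnc := hne c (by simp)
  simp only [Finset.mem_insert, Finset.mem_singleton] at ha hb hc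
  rcases ha with h1 | h1 | h1 | h1
  · exact absurd h1 hna
  · left
    refine ⟨h1, ?_⟩
    rcases hc with h2 | h2 | h2 | h2
    · exact absurd (key _ _ h2) (by rw [h1]; exact fun h => hbc h)
    · exact absurd (key _ _ h2) (by rw [key _ _ h1]; exact fun h => hac h)
    · exact absurd h2 hnc
    · exact h2
  · right; left
    refine ⟨h1, ?_⟩
    rcases hb with h2 | h2 | h2 | h2
    · exact absurd (key _ _ h2) (by rw [h1]; exact fun h => hbc h.symm)
    · exact absurd h2 hnb
    · exact absurd (key _ _ h2) (by rw [key _ _ h1]; exact fun h => hab h)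
    · exact h2
  · right; right
    refine ⟨h1, ?_⟩
    rcases hb with h2 | h2 | h2 | h2
    · exact absurd (key _ _ h2) (by rw [h1]; exact fun h => hbd h.symm)
    · exact absurd h2 hnb
    · exact h2
    · exact absurd (key _ _ h2) (by rw [key _ _ h1]; exact fun h => hab h)

/-- every symmetric `(2,2n-1)`-clan is of exactly one of the
types (a), (b), (c). -/
theorem symm_clan_oddLen_trichotomy (n : ℕ) (hn : 2 ≤ n)
    (γ : Clan (2 * n + 1)) (hsym : γ.IsSymmetric)
    (hclan : IsClan2 (2 * n - 1) γ) :
    (TypeA_oddLen n γ ∨ TypeB_oddLen n γ ∨ TypeC_oddLen n hn γ) ∧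
    ¬ (TypeA_oddLen n γ ∧ TypeB_oddLen n γ) ∧
    ¬ (TypeA_oddLen n γ ∧ TypeC_oddLen n hn γ) ∧
    ¬ (TypeB_oddLen n γ ∧ TypeC_oddLen n hn γ) := by
  classical
  have hsum := γ.card_sum
  rw [IsClan2] at hclan
  have key : 2 * γ.plusSet.card + γ.numSet.card = 4 := by omega
  constructor
  · have hP : γ.plusSet.card = 0 ∨ γ.plusSet.card = 1 ∨ γ.plusSet.card = 2 := by omega
    rcases hP with hP | hP | hP
    · -- Type B
      right; left
      have hK : γ.numSet.card = 4 := by omega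
      have hM : γ.minusSet.card = 2 * n - 3 := by omega
      refine ⟨hP, hM, ?_⟩
      have hlen : (γ.numSet.sort (· ≤ ·)).length = 4 := by
        rw [Finset.length_sort]; exact hK
      have hsort := γ.numSet.sortedLT_sort.pairwise
      have htf := Finset.sort_toFinset (r := (· ≤ ·)) (s := γ.numSet)
      obtain ⟨a, b, c, d, hll⟩ : ∃ a b c d,
          γ.numSet.sort (· ≤ ·) = [a, b, c, d] := by
        rcases hl : γ.numSet.sort (· ≤ ·) with _ | ⟨a, _ | ⟨b, _ | ⟨c, _ | ⟨d, t⟩⟩⟩⟩ <;>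
          rw [hl] at hlen <;> simp at hlen
        exact ⟨a, b, c, d, by rw [hlen]⟩
      rw [hll] at hsort htf
      simp only [List.pairwise_cons, List.mem_cons, List.mem_singleton,
        List.not_mem_nil, forall_eq_or_imp, forall_eq, IsEmpty.forall_iff,
        and_true, List.Pairwise.nil] at hsort
      obtain ⟨⟨hab, hac, had, -⟩, ⟨hbc, hbd, -⟩, ⟨hcd, -⟩, -⟩ := hsort
      have hset : γ.numSet = {a, b, c, d} := by
        rw [← htf]; simp
      have hnum : ∀ x ∈ ({a, b, c, d} : Finset (Fin (2 * n + 1))), γ.sign x = none := by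
        intro x hx
        have : x ∈ γ.numSet := by rw [hset]; exact hx
        simpa [Clan.numSet] using this
      have hmem : ∀ x ∈ ({a, b, c, d} : Finset (Fin (2 * n + 1))),
          γ.mate x ∈ ({a, b, c, d} : Finset (Fin (2 * n + 1))) := by
        intro x hx
        rw [← hset]
        simp only [Clan.numSet, Finset.mem_filter, Finset.mem_univ, true_and]
        exact γ.mate_num (hnum x hx)
      have hne : ∀ x ∈ ({a, b, c, d} : Finset (Fin (2 * n + 1))), γ.mate x ≠ x :=
        fun x hx => γ.mate_ne x (hnum x hx)
      exact ⟨a, b, c, d, hab, hbc, hcd, hset,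
        resolve4 γ.mate_invol hab.ne hac.ne had.ne hbc.ne hbd.ne hcd.ne hmem hne⟩
    · -- Type C
      right; right
      have hK : γ.numSet.card = 2 := by omega
      have hM : γ.minusSet.card = 2 * n - 2 := by omega
      refine ⟨hK, hP, hM, ?_⟩
      obtain ⟨i, hi⟩ := Finset.card_eq_one.mp hP
      have hsi : γ.sign i = some true := by
        have : i ∈ γ.plusSet := by rw [hi]; simp
        simpa [Clan.plusSet] using this
      have hrev : i.rev ∈ γ.plusSet := by
        simp only [Clan.plusSet, Finset.mem_filter, Finset.mem_univ, true_and]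
        rw [hsym.1 i]; exact hsi
      have hri : i.rev = i := by
        rw [hi] at hrev; simpa using hrev
      have hval : (i : ℕ) = n := by
        have h1 : (i.rev : ℕ) = (i : ℕ) := by rw [hri]
        rw [Fin.val_rev] at h1
        have := i.isLt
        omega
      have : (⟨n, by omega⟩ : Fin (2 * n + 1)) = i := Fin.ext hval.symm
      rw [this]; exact hsi
    · -- Type A
      left
      have hK : γ.numSet.card = 0 := by omega
      have hM : γ.minusSet.card = 2 * n - 1 := by omega
      exact ⟨hP, hM, Finset.card_eq_zero.mp hK⟩
  refine ⟨?_, ?_, ?_⟩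
  · rintro ⟨⟨h1, -, -⟩, ⟨h2, -⟩⟩; omega
  · rintro ⟨⟨h1, -, -⟩, ⟨-, h2, -⟩⟩; omega
  · rintro ⟨⟨h1, -⟩, ⟨-, h2, -⟩⟩; omega
end
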